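/- If G contains C4 as a minor, then the maximum matching width of G is at least 2. -/

import Mathlib

open SimpleGraph

/-- Size of a maximum matching in the bipartite graph of edges of `G` crossing `(A, Aᶜ)`. -/
noncomputable def mmVal {V : Type*} (G : SimpleGraph V) (A : Set V) : ℕ :=
  sSup {n | ∃ M : Finset (V × V),
    (∀ p ∈ M, p.1 ∈ A ∧ p.2 ∉ A ∧ G.Adj p.1 p.2) ∧
    (∀ p ∈ M, ∀ q ∈ M, p ≠ q → p.1 ≠ q.1 ∧ p.2 ≠ q.2) ∧ M.card = n}

/-- A branch-decomposition over the vertex set of `G`: a finite subcubic tree together with a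
bijection between its leaves and the vertices of `G`. -/
structure BranchDecomp {V : Type*} (G : SimpleGraph V) where
  B : Type
  finB : Finite B
  T : SimpleGraph B
  isTree : T.IsTree
  subcubic : ∀ b : B, (T.neighborSet b).ncard = 1 ∨ (T.neighborSet b).ncard = 3
  L : {b : B // (T.neighborSet b).ncard = 1} ≃ V

/-- The set of vertices of `G` whose leaves lie on the `u`-side of the tree edge `uw`. -/
noncomputable def BranchDecomp.side {V : Type*} {G : SimpleGraph V} (D : BranchDecomp G)
    (u w : D.B) : Set V :=
  {x : V | (D.T.deleteEdges {s(u, w)}).Reachable (D.L.symm x).1 u}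

/-- The width of a branch-decomposition is at most `k`. -/
def BranchDecomp.widthLE {V : Type*} {G : SimpleGraph V} (D : BranchDecomp G) (k : ℕ) : Prop :=
  ∀ u w : D.B, D.T.Adj u w → mmVal G (D.side u w) ≤ k

/-- The maximum matching width of `G`. -/
noncomputable def mmw {V : Type*} (G : SimpleGraph V) : ℕ :=
  sInf {k | ∃ D : BranchDecomp G, D.widthLE k}
/-- `H` is a minor of `G`: there is a family of nonempty, pairwise disjoint, connected branch
sets in `G` indexed by the vertices of `H`, with edges of `H` realized by edges of `G`. -/
def IsMinor {W : Type*} {V : Type*} (H : SimpleGraph W) (G : SimpleGraph V) : Prop :=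
  ∃ φ : W → Set V,
    (∀ w, (φ w).Nonempty) ∧
    (∀ w, (G.induce (φ w)).Connected) ∧
    (∀ w w', w ≠ w' → Disjoint (φ w) (φ w')) ∧
    (∀ w w', H.Adj w w' → ∃ a ∈ φ w, ∃ b ∈ φ w', G.Adj a b)

/-- The `k × k` grid graph: vertices `(i, j)`, edges between vertices at Manhattan distance 1. -/
def gridGraph (k : ℕ) : SimpleGraph (Fin k × Fin k) :=
  SimpleGraph.fromRel (fun p q =>
    (p.1 = q.1 ∧ (p.2 : ℕ) + 1 = (q.2 : ℕ)) ∨ (p.2 = q.2 ∧ (p.1 : ℕ) + 1 = (q.1 : ℕ)))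

/-- The row `R_j` of the `k × k` grid. -/
def gridRow (k : ℕ) (j : Fin k) : Set (Fin k × Fin k) := {p | p.2 = j}

/-- The column `C_i` of the `k × k` grid. -/
def gridCol (k : ℕ) (i : Fin k) : Set (Fin k × Fin k) := {p | p.1 = i}

/-- `X` is small: `mm(X) < k` and `X` contains no full row. -/
def GridSmall (k : ℕ) (X : Set (Fin k × Fin k)) : Prop :=
  mmVal (gridGraph k) X < k ∧ ∀ j : Fin k, ¬ gridRow k j ⊆ X

/-- `G` is `k`-connected: `|V(G)| ≥ k` and deleting fewer than `k` vertices leaves `G`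
connected. -/
def KConnected {V : Type*} (k : ℕ) (G : SimpleGraph V) : Prop :=
  k ≤ Nat.card V ∧ ∀ X : Set V, X.ncard < k → (G.induce Xᶜ).Connected

/-- A block of `G`: a bridge (with its two endpoints), or a maximal 2-connected induced
subgraph. -/
def IsBlock {V : Type*} (G : SimpleGraph V) (Bs : Set V) : Prop :=
  (∃ a b : V, G.Adj a b ∧ G.IsBridge s(a, b) ∧ Bs = {a, b}) ∨
  (KConnected 2 (G.induce Bs) ∧
    ∀ B' : Set V, Bs ⊆ B' → KConnected 2 (G.induce B') → B' = Bs)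

/-- A tree-representation of `G`: a finite subcubic tree `T` and nontrivial subtrees `F x`
for each vertex `x` such that adjacent vertices have intersecting subtrees. -/
structure TreeRep {V : Type*} (G : SimpleGraph V) where
  B : Type
  finB : Finite B
  T : SimpleGraph B
  isTree : T.IsTree
  subcubic : ∀ b : B, (T.neighborSet b).ncard = 1 ∨ (T.neighborSet b).ncard = 3
  F : V → Set B
  nontrivial : ∀ x : V, ∃ u w : B, u ∈ F x ∧ w ∈ F x ∧ T.Adj u w
  subtree : ∀ x : V, (T.induce (F x)).Connected
  adjMeet : ∀ x y : V, G.Adj x y → (F x ∩ F y).Nonempty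

/-- Every edge of the tree lies in at most `k` of the subtrees. -/
def TreeRep.widthLE {V : Type*} {G : SimpleGraph V} (R : TreeRep G) (k : ℕ) : Prop :=
  ∀ u w : R.B, R.T.Adj u w → {x : V | u ∈ R.F x ∧ w ∈ R.F x}.ncard ≤ k

/-- Contraction of the edge `uv` of `G` (the merged vertex is `u`). -/
def contractEdge {V : Type*} (G : SimpleGraph V) (u v : V) : SimpleGraph {x : V // x ≠ v} :=
  SimpleGraph.fromRel (fun x y =>
    G.Adj x.1 y.1 ∨ (x.1 = u ∧ G.Adj v y.1) ∨ (y.1 = u ∧ G.Adj v x.1))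



variable {B : Type} (T : SimpleGraph B)

/-- side of an edge -/
def sideB (u w : B) : Set B := {x : B | (T.deleteEdges {s(u, w)}).Reachable x u}

lemma sideB_self {u w : B} : u ∈ sideB T u w := Reachable.refl u

lemma sideB_del_eq (u w : B) : T.deleteEdges {s(w,u)} = T.deleteEdges {s(u,w)} := by
  rw [Sym2.eq_swap]

lemma sideB_cover (hc : T.Connected) (u w : B) :
    ∀ x, x ∈ sideB T u w ∨ x ∈ sideB T w u := by
  intro x
  obtain ⟨p⟩ := hc.preconnected x u
  suffices H : ∀ {a b : B} (_ : T.Walk a b),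
      b ∈ sideB T u w ∨ b ∈ sideB T w u → a ∈ sideB T u w ∨ a ∈ sideB T w u from
    H p (Or.inl (sideB_self T))
  intro a b q hb
  induction q with
  | nil => exact hb
  | @cons a c _ ha _ ih =>
    have hc' := ih hb
    by_cases he : s(a, c) = s(u, w)
    · rw [Sym2.eq_iff] at he
      rcases he with ⟨rfl, rfl⟩ | ⟨rfl, rfl⟩
      · exact Or.inl (sideB_self T)
      · exact Or.inr (sideB_self T)
    · rcases hc' with h | h
      · exact Or.inl (Reachable.trans ⟨Walk.cons (by simp [ha, he]) Walk.nil⟩ h)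
      · refine Or.inr (Reachable.trans ⟨Walk.cons ?_ Walk.nil⟩ h)
        rw [sideB_del_eq]
        simp [ha, he]

lemma sideB_not_reach (hT : T.IsTree) {u w : B} (h : T.Adj u w) :
    ¬ (T.deleteEdges {s(u,w)}).Reachable u w := by
  have hb := (isAcyclic_iff_forall_adj_isBridge.mp hT.IsAcyclic) h
  rw [isBridge_iff] at hb
  exact hb

lemma sideB_disj (hT : T.IsTree) {u w : B} (h : T.Adj u w) {x : B}
    (h1 : x ∈ sideB T u w) (h2 : x ∈ sideB T w u) : False := by
  rw [sideB, Set.mem_setOf_eq, sideB_del_eq] at h2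
  exact sideB_not_reach T hT h ((h1.symm.trans h2))

lemma sideB_step (hT : T.IsTree) {u w x : B} (h : T.Adj u w) (hx : x ∈ sideB T w u)
    (hxw : x ≠ w) : ∃ z, T.Adj w z ∧ z ≠ u ∧ x ∈ sideB T z w := by
  classical
  rw [sideB, Set.mem_setOf_eq, sideB_del_eq] at hx
  obtain ⟨p0⟩ := hx.symm
  obtain ⟨p, hp⟩ := p0.toPath
  cases p with
  | nil => exact absurd rfl hxw.symm
  | @cons _ z _ hadj tail =>
    have hz : T.Adj w z ∧ z ≠ u := by
      rw [deleteEdges_adj] at hadj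
      refine ⟨hadj.1, ?_⟩
      rintro rfl
      exact hadj.2 (by rw [Sym2.eq_swap]; rfl)
    have hwns : w ∉ tail.support := by
      have := hp.2
      exact (by simpa using this : w ∉ tail.support ∧ tail.support.Nodup).1
    refine ⟨z, hz.1, hz.2, ?_⟩
    have hedges : ∀ e ∈ tail.edges, e ∈ (T.deleteEdges {s(z,w)}).edgeSet := by
      intro e he
      have h1 : e ∈ T.edgeSet := by
        have := Walk.edges_subset_edgeSet tail he
        rw [edgeSet_deleteEdges] at this
        exact this.1
      rw [edgeSet_deleteEdges]
      refine ⟨h1, ?_⟩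
      rintro rfl
      exact hwns (tail.snd_mem_support_of_mem_edges he)
    exact ⟨(tail.transfer _ hedges).reverse⟩

lemma sideB_mono (hT : T.IsTree) {u w z : B} (hwu : T.Adj w u) (hwz : T.Adj w z)
    (hzu : z ≠ u) : sideB T z w ⊆ sideB T w u := by
  classical
  intro x hx
  obtain ⟨q⟩ := (hx : (T.deleteEdges {s(z,w)}).Reachable x z)
  have hwq : w ∉ q.support := by
    intro hw
    have : (T.deleteEdges {s(z,w)}).Reachable w z := ⟨q.dropUntil w hw⟩
    exact sideB_disj T hT hwz.symm this (sideB_self T)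
  have hedges : ∀ e ∈ q.edges, e ∈ (T.deleteEdges {s(u,w)}).edgeSet := by
    intro e he
    have h1 : e ∈ T.edgeSet := by
      have := Walk.edges_subset_edgeSet q he
      rw [edgeSet_deleteEdges] at this
      exact this.1
    rw [edgeSet_deleteEdges]
    refine ⟨h1, ?_⟩
    rintro rfl
    exact hwq (q.snd_mem_support_of_mem_edges he)
  have hzw : (T.deleteEdges {s(u,w)}).Adj z w := by
    rw [deleteEdges_adj]
    refine ⟨hwz.symm, ?_⟩
    intro hh
    simp only [Set.mem_singleton_iff, Sym2.eq_iff] at hh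
    rcases hh with ⟨rfl, _⟩ | ⟨rfl, rfl⟩
    · exact hzu rfl
    · exact hwz.ne rfl
  have : (T.deleteEdges {s(u,w)}).Reachable x w :=
    Reachable.trans ⟨q.transfer _ hedges⟩ ⟨Walk.cons hzw Walk.nil⟩
  rw [sideB, Set.mem_setOf_eq, sideB_del_eq]
  exact this

lemma sideB_sib_disj (hT : T.IsTree) {w z1 z2 x : B} (h1 : T.Adj w z1) (h2 : T.Adj w z2)
    (hz : z1 ≠ z2) (hx1 : x ∈ sideB T z1 w) (hx2 : x ∈ sideB T z2 w) : False := by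
  have := sideB_mono T hT h1 h2 (fun hh => hz hh.symm) hx2
  exact sideB_disj T hT h1.symm hx1 this

lemma sideB_leaf (hT : T.IsTree) {b u : B} (hl : (T.neighborSet b).ncard = 1)
    (hbu : T.Adj b u) : sideB T b u = {b} := by
  ext x
  simp only [Set.mem_singleton_iff]
  constructor
  · intro hx
    by_contra hxb
    obtain ⟨z, hz1, hz2, _⟩ := sideB_step T hT hbu.symm hx hxb
    obtain ⟨a, ha⟩ := Set.ncard_eq_one.mp hl
    have hu : u ∈ T.neighborSet b := hbu
    have hzz : z ∈ T.neighborSet b := hz1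
    rw [ha, Set.mem_singleton_iff] at hu hzz
    exact hz2 (hzz.trans hu.symm)
  · rintro rfl; exact sideB_self T

lemma balanced [Finite B] (hT : T.IsTree)
    (hsub : ∀ v : B, (T.neighborSet v).ncard = 1 ∨ (T.neighborSet v).ncard = 3)
    (b : Fin 4 → B) (hinj : Function.Injective b)
    (hleaf : ∀ i, (T.neighborSet (b i)).ncard = 1) :
    ∃ u w, T.Adj u w ∧
      ({i : Fin 4 | b i ∈ sideB T u w} : Set (Fin 4)).ncard = 2 := by
  classical
  set cnt : B → B → ℕ := fun u w => (Finset.univ.filter fun i => b i ∈ sideB T w u).card with hcnt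
  -- the set of "good" oriented edges
  set goodSet : Set (B × B) := {p | T.Adj p.1 p.2 ∧ 2 ≤ cnt p.1 p.2} with hgood
  have hne : goodSet.Nonempty := by
    have h0 : (T.neighborSet (b 0)).Nonempty := by
      rw [← Set.ncard_pos (Set.toFinite _), hleaf 0]; norm_num
    obtain ⟨u0, hu0⟩ := h0
    refine ⟨(b 0, u0), hu0, ?_⟩
    have hsubset : ({1, 2, 3} : Finset (Fin 4)) ⊆
        Finset.univ.filter fun i => b i ∈ sideB T u0 (b 0) := by
      intro i hi
      rw [Finset.mem_filter]
      refine ⟨Finset.mem_univ _, ?_⟩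
      rcases sideB_cover T hT.isConnected (b 0) u0 (b i) with h | h
      · rw [sideB_leaf T hT (hleaf 0) hu0] at h
        have : i = 0 := hinj h
        subst this; simp at hi
      · exact h
    calc (2:ℕ) ≤ ({1,2,3} : Finset (Fin 4)).card := by decide
    _ ≤ _ := Finset.card_le_card hsubset
  -- minimize the far-side size over good edges
  set vals : Set ℕ := {n | ∃ p ∈ goodSet, (sideB T p.2 p.1).ncard = n} with hvals
  have hvne : vals.Nonempty := ⟨_, hne.choose, hne.choose_spec, rfl⟩
  obtain ⟨⟨u, w⟩, hpgood, hval⟩ := Nat.sInf_mem hvne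
  obtain ⟨hadj, h2le⟩ := hpgood
  dsimp only at hadj h2le hval
  have hmin : ∀ m ∈ vals, sInf vals ≤ m := fun m hm => Nat.sInf_le hm
  -- w is not a leaf
  have hw3 : (T.neighborSet w).ncard = 3 := by
    rcases hsub w with h1 | h3
    · exfalso
      have hside : sideB T w u = {w} := sideB_leaf T hT h1 hadj.symm
      have : cnt u w ≤ 1 := by
        apply Finset.card_le_one.mpr
        intro i hi j hj
        rw [Finset.mem_filter, hside] at hi hj
        exact hinj (hi.2.trans hj.2.symm)
      omega
    · exact h3
  -- get the two other neighbors of w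
  obtain ⟨x, y, z, hxy, hxz, hyz, hset⟩ := Set.ncard_eq_three.mp hw3
  have hu_mem : u ∈ T.neighborSet w := hadj.symm
  rw [hset] at hu_mem
  obtain ⟨z1, z2, h12, h1u, h2u, hmem1, hmem2, hcomplete⟩ :
      ∃ z1 z2, z1 ≠ z2 ∧ z1 ≠ u ∧ z2 ≠ u ∧ z1 ∈ T.neighborSet w ∧ z2 ∈ T.neighborSet w ∧
        ∀ t, t ∈ T.neighborSet w → t = u ∨ t = z1 ∨ t = z2 := by
    have hx' : x ∈ T.neighborSet w := by rw [hset]; simp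
    have hy' : y ∈ T.neighborSet w := by rw [hset]; simp
    have hz' : z ∈ T.neighborSet w := by rw [hset]; simp
    have hall : ∀ t, t ∈ T.neighborSet w → t = x ∨ t = y ∨ t = z := by
      intro t ht; rw [hset] at ht; simpa using ht
    rcases hu_mem with rfl | rfl | rfl
    · exact ⟨y, z, hyz, fun h => hxy h.symm, fun h => hxz h.symm, hy', hz',
        fun t ht => hall t ht⟩
    · exact ⟨x, z, hxz, hxy, fun h => hyz h.symm, hx', hz',
        fun t ht => by rcases hall t ht with h|h|h <;> tauto⟩
    · exact ⟨x, y, hxy, hxz, hyz, hx', hy',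
        fun t ht => by rcases hall t ht with h|h|h <;> tauto⟩
  have hwz1 : T.Adj w z1 := hmem1
  have hwz2 : T.Adj w z2 := hmem2
  -- each marked vertex on the w-side is on the z1-side or z2-side
  have key : ∀ i, b i ∈ sideB T w u → b i ∈ sideB T z1 w ∨ b i ∈ sideB T z2 w := by
    intro i hi
    have hbne : b i ≠ w := by
      intro hh
      have := hleaf i; rw [hh, hw3] at this; omega
    obtain ⟨t, hwt, htu, hside⟩ := sideB_step T hT hadj hi hbne
    rcases hcomplete t hwt with rfl | rfl | rfl
    · exact absurd rfl htu
    · exact Or.inl hside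
    · exact Or.inr hside
  -- each sub-side has at most one marked vertex
  have hc : ∀ zi, T.Adj w zi → zi ≠ u → cnt w zi ≤ 1 := by
    intro zi hwzi hziu
    by_contra hcon
    push_neg at hcon
    have hgood2 : ((w, zi) : B × B) ∈ goodSet := ⟨hwzi, hcon⟩
    have hlt : (sideB T zi w).ncard < (sideB T w u).ncard := by
      apply Set.ncard_lt_ncard _ (Set.toFinite _)
      constructor
      · exact sideB_mono T hT hadj.symm hwzi hziu
      · intro hsub2
        have hw_in : w ∈ sideB T w u := sideB_self T
        have := hsub2 hw_in
        exact sideB_disj T hT hwzi.symm this (sideB_self T)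
    rw [← hval] at hmin
    have hmm := hmin _ ⟨(w, zi), hgood2, rfl⟩
    dsimp only at hmm
    omega
  -- conclude
  have hsum : cnt u w ≤ cnt w z1 + cnt w z2 := by
    have hsubs : (Finset.univ.filter fun i => b i ∈ sideB T w u) ⊆
        (Finset.univ.filter fun i => b i ∈ sideB T z1 w) ∪
        (Finset.univ.filter fun i => b i ∈ sideB T z2 w) := by
      intro i hi
      rw [Finset.mem_filter] at hi
      rcases key i hi.2 with h | h
      · exact Finset.mem_union_left _ (Finset.mem_filter.mpr ⟨Finset.mem_univ _, h⟩)
      · exact Finset.mem_union_right _ (Finset.mem_filter.mpr ⟨Finset.mem_univ _, h⟩)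
    calc cnt u w ≤ _ := Finset.card_le_card hsubs
    _ ≤ _ := Finset.card_union_le _ _
  have h1 := hc z1 hwz1 h1u
  have h2 := hc z2 hwz2 h2u
  refine ⟨w, u, hadj.symm, ?_⟩
  have hconv : ({i : Fin 4 | b i ∈ sideB T w u} : Set (Fin 4)).ncard = cnt u w := by
    rw [hcnt]
    rw [Set.ncard_eq_toFinset_card']
    simp [Set.toFinset_setOf]
  omega
lemma cross_of_connected {V : Type} {G : SimpleGraph V} {s A : Set V}
    (hc : (G.induce s).Connected) {p q : V} (hp : p ∈ s) (hq : q ∈ s)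
    (hpA : p ∈ A) (hqA : q ∉ A) :
    ∃ x y, x ∈ s ∧ y ∈ s ∧ x ∈ A ∧ y ∉ A ∧ G.Adj x y := by
  obtain ⟨wlk⟩ := hc.preconnected ⟨p, hp⟩ ⟨q, hq⟩
  clear hc
  suffices H : ∀ (c d : s) (_ : (G.induce s).Walk c d), c.1 ∈ A → d.1 ∉ A →
      ∃ x y, x ∈ s ∧ y ∈ s ∧ x ∈ A ∧ y ∉ A ∧ G.Adj x y from H _ _ wlk hpA hqA
  intro c d wk
  induction wk with
  | nil => intro h1 h2; exact absurd h1 h2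
  | @cons a e _ ha tl ih =>
    intro h1 h2
    by_cases he : e.1 ∈ A
    · exact ih he h2
    · exact ⟨a.1, e.1, a.2, e.2, h1, he, ha⟩

def adj4 (i j : Fin 4) : Bool := decide ((cycleGraph 4).Adj i j)

def Qb (sp inA : Fin 4 → Bool) (i j : Fin 4) : Bool :=
  (i == j && sp i) || (adj4 i j && !sp i && !sp j && inA i && !inA j)

lemma coreQ : ∀ (sp inA : Fin 4 → Bool),
    (Finset.univ.filter fun i => inA i = true).card = 2 →
    ∃ i j k l : Fin 4, Qb sp inA i j = true ∧ Qb sp inA k l = true ∧ i ≠ k ∧ j ≠ l := by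
  decide

lemma two_le_mmVal {V : Type} [Finite V] (G : SimpleGraph V) (A : Set V)
    {x1 y1 x2 y2 : V} (h1 : x1 ∈ A) (h1' : y1 ∉ A) (ha1 : G.Adj x1 y1)
    (h2 : x2 ∈ A) (h2' : y2 ∉ A) (ha2 : G.Adj x2 y2) (hx : x1 ≠ x2) (hy : y1 ≠ y2) :
    2 ≤ mmVal G A := by
  classical
  haveI := Fintype.ofFinite V
  have hBdd : BddAbove {n | ∃ M : Finset (V × V),
      (∀ p ∈ M, p.1 ∈ A ∧ p.2 ∉ A ∧ G.Adj p.1 p.2) ∧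
      (∀ p ∈ M, ∀ q ∈ M, p ≠ q → p.1 ≠ q.1 ∧ p.2 ≠ q.2) ∧ M.card = n} := by
    refine ⟨Fintype.card V, ?_⟩
    rintro n ⟨M, _, hM2, rfl⟩
    have hinj : Set.InjOn Prod.fst (M : Set (V × V)) := by
      intro p hp q hq hpq
      by_contra hne
      exact (hM2 p hp q hq hne).1 hpq
    calc M.card = (M.image Prod.fst).card := (Finset.card_image_of_injOn hinj).symm
    _ ≤ Fintype.card V := Finset.card_le_univ _
  apply le_csSup hBdd
  refine ⟨{(x1, y1), (x2, y2)}, ?_, ?_, ?_⟩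
  · intro p hp
    simp only [Finset.mem_insert, Finset.mem_singleton] at hp
    rcases hp with rfl | rfl
    · exact ⟨h1, h1', ha1⟩
    · exact ⟨h2, h2', ha2⟩
  · intro p hp q hq hpq
    simp only [Finset.mem_insert, Finset.mem_singleton] at hp hq
    rcases hp with rfl | rfl <;> rcases hq with rfl | rfl
    · exact absurd rfl hpq
    · exact ⟨hx, hy⟩
    · exact ⟨hx.symm, hy.symm⟩
    · exact absurd rfl hpq
  · rw [Finset.card_insert_of_notMem, Finset.card_singleton]
    simp only [Finset.mem_singleton]
    intro hh
    exact hx (congrArg Prod.fst hh)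

lemma mmVal_le_card {V : Type} [Finite V] (G : SimpleGraph V) (A : Set V) :
    mmVal G A ≤ Nat.card V := by
  classical
  haveI := Fintype.ofFinite V
  rw [Nat.card_eq_fintype_card]
  apply csSup_le
  · exact ⟨0, ∅, by simp⟩
  · rintro n ⟨M, _, hM2, rfl⟩
    have hinj : Set.InjOn Prod.fst (M : Set (V × V)) := by
      intro p hp q hq hpq
      by_contra hne
      exact (hM2 p hp q hq hne).1 hpq
    calc M.card = (M.image Prod.fst).card := (Finset.card_image_of_injOn hinj).symm
    _ ≤ Fintype.card V := Finset.card_le_univ _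


/-- spine attachment point of leaf `i` -/
def spf (n i : ℕ) : ℕ := min (i - 1) (n - 3)

def catAdj (n : ℕ) : (Fin n ⊕ Fin (n-2)) → (Fin n ⊕ Fin (n-2)) → Prop
  | .inl _, .inl _ => False
  | .inl i, .inr j => (j : ℕ) = spf n i
  | .inr j, .inl i => (j : ℕ) = spf n i
  | .inr j, .inr k => (j : ℕ) + 1 = k ∨ (k : ℕ) + 1 = j

@[simp] lemma catAdj_ll {n} {i i' : Fin n} : catAdj n (.inl i) (.inl i') ↔ False := Iff.rfl
@[simp] lemma catAdj_lr {n} {i : Fin n} {j : Fin (n-2)} :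
    catAdj n (.inl i) (.inr j) ↔ (j : ℕ) = spf n i := Iff.rfl
@[simp] lemma catAdj_rl {n} {i : Fin n} {j : Fin (n-2)} :
    catAdj n (.inr j) (.inl i) ↔ (j : ℕ) = spf n i := Iff.rfl
@[simp] lemma catAdj_rr {n} {j k : Fin (n-2)} :
    catAdj n (.inr j) (.inr k) ↔ (j : ℕ) + 1 = k ∨ (k : ℕ) + 1 = j := Iff.rfl

def cat (n : ℕ) : SimpleGraph (Fin n ⊕ Fin (n-2)) where
  Adj := catAdj n
  symm := ⟨by rintro (i|j) (i'|j') h <;> simp_all <;> omega⟩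
  loopless := ⟨by rintro (i|j) h <;> simp_all⟩

lemma cat_connected (n : ℕ) (hn : 4 ≤ n) : (cat n).Connected := by
  have hz : (0 : ℕ) < n - 2 := by omega
  have hreach : ∀ (m : ℕ) (j : Fin (n-2)), (j : ℕ) = m →
      (cat n).Reachable (.inr j) (.inr ⟨0, hz⟩) := by
    intro m
    induction m with
    | zero => intro j hj; rw [show j = ⟨0, hz⟩ from Fin.ext hj]
    | succ m ih =>
      intro j hj
      have hm : m < n - 2 := by omega
      refine Reachable.trans ?_ (ih ⟨m, hm⟩ rfl)
      exact Adj.reachable (by simp [cat, hj])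
  have hconn : ∀ x, (cat n).Reachable x (.inr ⟨0, hz⟩) := by
    rintro (i | j)
    · have hlt : spf n i < n - 2 := by unfold spf; omega
      refine Reachable.trans (Adj.reachable (v := Sum.inr ⟨spf n i.1, hlt⟩) ?_) (hreach _ _ rfl)
      simp [cat]
    · exact hreach _ j rfl
  rw [connected_iff_exists_forall_reachable]
  exact ⟨.inr ⟨0, hz⟩, fun x => (hconn x).symm⟩

lemma reach_invar {B : Type*} {H : SimpleGraph B} (P : B → Prop)
    (hP : ∀ a b, H.Adj a b → (P a ↔ P b)) {x y : B} (h : H.Reachable x y) : P x ↔ P y := by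
  obtain ⟨w⟩ := h
  induction w with
  | nil => rfl
  | cons ha _ ih => exact (hP _ _ ha).trans ih

lemma cat_acyclic (n : ℕ) (hn : 4 ≤ n) : (cat n).IsAcyclic := by
  rw [isAcyclic_iff_forall_adj_isBridge]
  -- auxiliary: spine edges j → j+1
  have spine_bridge : ∀ (j k : Fin (n-2)), (j : ℕ) + 1 = (k : ℕ) →
      (cat n).IsBridge s(.inr j, .inr k) := by
    intro j k hjk
    rw [isBridge_iff]
    intro hreach
    set P : (Fin n ⊕ Fin (n-2)) → Prop := fun x =>
      (Sum.elim (fun i : Fin n => spf n i.1) (fun m : Fin (n-2) => (m : ℕ)) x) ≤ (j : ℕ)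
      with hPdef
    have hiff := reach_invar P ?_ hreach
    · simp only [hPdef, Sum.elim_inr] at hiff
      omega
    · rintro (a|a) (b|b) hab <;>
        simp only [sdiff_adj, fromEdgeSet_adj, Set.mem_singleton_iff, cat] at hab <;>
        simp only [hPdef, Sum.elim_inl, Sum.elim_inr]
      · simp at hab
      · obtain ⟨h1, _⟩ := hab
        change catAdj n (.inl a) (.inr b) at h1
        rw [catAdj_lr] at h1
        omega
      · obtain ⟨h1, _⟩ := hab
        change catAdj n (.inr a) (.inl b) at h1
        rw [catAdj_rl] at h1
        omega
      · obtain ⟨h1, h2⟩ := hab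
        change catAdj n (.inr a) (.inr b) at h1
        rw [catAdj_rr] at h1
        have hne : ¬ (s(Sum.inr a, Sum.inr b) = s(Sum.inr j, Sum.inr k) ∧
            Sum.inr (α := Fin n) a ≠ Sum.inr b) := h2
        have hb : (a : ℕ) ≠ (b : ℕ) := by omega
        have : ¬ ((a = j ∧ b = k) ∨ (a = k ∧ b = j)) := by
          intro hcase
          apply hne
          constructor
          · rw [Sym2.eq_iff]
            rcases hcase with ⟨rfl, rfl⟩ | ⟨rfl, rfl⟩
            · exact Or.inl ⟨rfl, rfl⟩
            · exact Or.inr ⟨rfl, rfl⟩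
          · intro hh
            simp only [Sum.inr.injEq] at hh
            exact hb (congrArg Fin.val hh)
        have hvals : ¬ (((a:ℕ) = j ∧ (b:ℕ) = k) ∨ ((a:ℕ) = k ∧ (b:ℕ) = j)) := by
          intro hcase
          apply this
          rcases hcase with ⟨h3, h4⟩ | ⟨h3, h4⟩
          · exact Or.inl ⟨Fin.ext h3, Fin.ext h4⟩
          · exact Or.inr ⟨Fin.ext h3, Fin.ext h4⟩
        omega
  -- auxiliary: leaf edges
  have leaf_bridge : ∀ (i : Fin n) (j : Fin (n-2)), (j : ℕ) = spf n i →
      (cat n).IsBridge s(.inl i, .inr j) := by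
    intro i j hj
    rw [isBridge_iff]
    intro hreach
    set P : (Fin n ⊕ Fin (n-2)) → Prop := fun x => x = .inl i with hPdef
    have hiff := reach_invar P ?_ hreach
    · simp [hPdef] at hiff
    · rintro a b hab
      change (cat n).Adj a b ∧ ¬ (fromEdgeSet {s(Sum.inl i, Sum.inr j)}).Adj a b at hab
      obtain ⟨h1, h2⟩ := hab
      simp only [hPdef]
      constructor
      · rintro rfl
        rcases b with b | b
        · simp [cat] at h1
        · exfalso
          have : (b : ℕ) = spf n i := by simpa [cat] using h1
          have hbj : b = j := Fin.ext (by omega)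
          subst hbj
          exact h2 ⟨rfl, by simp⟩
      · rintro rfl
        rcases a with a | a
        · simp [cat] at h1
        · exfalso
          have : (a : ℕ) = spf n i := by simpa [cat] using h1
          have haj : a = j := Fin.ext (by omega)
          subst haj
          exact h2 ⟨Sym2.eq_swap ▸ rfl, by simp⟩
  rintro (a|a) (b|b) hab
  · simp [cat] at hab
  · exact leaf_bridge a b (by simpa [cat] using hab)
  · have := leaf_bridge b a (by simpa [cat] using hab)
    rwa [Sym2.eq_swap] at this
  · have h1 : (a:ℕ)+1 = b ∨ (b:ℕ)+1 = a := by simpa [cat] using hab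
    rcases h1 with h1 | h1
    · exact spine_bridge a b h1
    · have := spine_bridge b a h1
      rwa [Sym2.eq_swap] at this

lemma cat_isTree (n : ℕ) (hn : 4 ≤ n) : (cat n).IsTree :=
  ⟨cat_connected n hn, cat_acyclic n hn⟩

lemma cat_nbr_inl (n : ℕ) (hn : 4 ≤ n) (i : Fin n) :
    (cat n).neighborSet (.inl i) = {.inr ⟨spf n i.1, by unfold spf; omega⟩} := by
  ext y
  rcases y with i' | j
  · simp [neighborSet, cat]
  · simp only [mem_neighborSet, Set.mem_singleton_iff, Sum.inr.injEq]
    show catAdj n (.inl i) (.inr j) ↔ _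
    rw [catAdj_lr]
    constructor
    · intro h; exact Fin.ext h
    · intro h; rw [h]

lemma cat_deg_inl (n : ℕ) (hn : 4 ≤ n) (i : Fin n) :
    ((cat n).neighborSet (.inl i)).ncard = 1 := by
  rw [cat_nbr_inl n hn i]; exact Set.ncard_singleton _

lemma cat_deg_inr (n : ℕ) (hn : 4 ≤ n) (j : Fin (n-2)) :
    ((cat n).neighborSet (.inr j)).ncard = 3 := by
  have hj := j.2
  rcases Nat.lt_or_ge 0 (j : ℕ) with hj0 | hj0
  case inr =>
    -- j = 0 : neighbors are leaves 0, 1 and spine 1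
    have hj' : (j : ℕ) = 0 := by omega
    have hs : (cat n).neighborSet (.inr j) =
        {.inl ⟨0, by omega⟩, .inl ⟨1, by omega⟩, .inr ⟨1, by omega⟩} := by
      ext y
      rcases y with i | m
      · show catAdj n (.inr j) (.inl i) ↔ _
        rw [catAdj_rl]
        simp only [Set.mem_insert_iff, Set.mem_singleton_iff, Sum.inl.injEq, reduceCtorEq,
          or_false]
        unfold spf
        constructor
        · intro h
          have : (i : ℕ) = 0 ∨ (i : ℕ) = 1 := by omega
          rcases this with h' | h'
          · exact Or.inl (Fin.ext (by simp only [Fin.val_mk]; try omega))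
          · exact Or.inr (Fin.ext (by simp only [Fin.val_mk]; try omega))
        · rintro (rfl | rfl) <;> simp only [Fin.val_mk] <;> omega
      · show catAdj n (.inr j) (.inr m) ↔ _
        rw [catAdj_rr]
        simp only [Set.mem_insert_iff, Set.mem_singleton_iff, reduceCtorEq, Sum.inr.injEq,
          false_or]
        constructor
        · intro h
          refine Fin.ext ?_
          simp only
          omega
        · rintro rfl; simp only [Fin.val_mk]; try omega
    rw [hs]
    rw [Set.ncard_insert_of_notMem (by simp [Fin.ext_iff]; try omega), Set.ncard_insert_of_notMem (by simp [Fin.ext_iff]; try omega),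
      Set.ncard_singleton]
  case inl =>
    rcases Nat.lt_or_ge (j : ℕ) (n - 3) with hjt | hjt
    · -- middle : leaf j+1, spine j-1, spine j+1
      have hs : (cat n).neighborSet (.inr j) =
          {.inl ⟨(j:ℕ)+1, by omega⟩, .inr ⟨(j:ℕ)-1, by omega⟩, .inr ⟨(j:ℕ)+1, by omega⟩} := by
        ext y
        rcases y with i | m
        · show catAdj n (.inr j) (.inl i) ↔ _
          rw [catAdj_rl]
          simp only [Set.mem_insert_iff, Set.mem_singleton_iff, Sum.inl.injEq, reduceCtorEq,
            or_false]
          unfold spf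
          constructor
          · intro h
            have hi := i.2
            exact Fin.ext (by simp only [Fin.val_mk]; try omega)
          · rintro rfl; simp only [Fin.val_mk]; try omega
        · show catAdj n (.inr j) (.inr m) ↔ _
          rw [catAdj_rr]
          simp only [Set.mem_insert_iff, Set.mem_singleton_iff, reduceCtorEq, Sum.inr.injEq,
            false_or]
          constructor
          · intro h
            rcases h with h | h
            · exact Or.inr (Fin.ext (by simp only [Fin.val_mk]; try omega))
            · exact Or.inl (Fin.ext (by simp only [Fin.val_mk]; try omega))
          · rintro (rfl | rfl)
            · exact Or.inr (by simp only [Fin.val_mk]; try omega)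
            · exact Or.inl (by simp only [Fin.val_mk]; try omega)
      rw [hs]
      rw [Set.ncard_insert_of_notMem (by simp [Fin.ext_iff]; try omega), Set.ncard_insert_of_notMem
        (by simp [Fin.ext_iff]; try omega), Set.ncard_singleton]
    · -- j = n-3 : leaves n-2, n-1, spine n-4
      have hj' : (j : ℕ) = n - 3 := by omega
      have hs : (cat n).neighborSet (.inr j) =
          {.inl ⟨n-2, by omega⟩, .inl ⟨n-1, by omega⟩, .inr ⟨n-4, by omega⟩} := by
        ext y
        rcases y with i | m
        · show catAdj n (.inr j) (.inl i) ↔ _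
          rw [catAdj_rl]
          simp only [Set.mem_insert_iff, Set.mem_singleton_iff, Sum.inl.injEq, reduceCtorEq,
            or_false]
          unfold spf
          constructor
          · intro h
            have hi := i.2
            have : (i : ℕ) = n-2 ∨ (i : ℕ) = n-1 := by omega
            rcases this with h' | h'
            · exact Or.inl (Fin.ext (by simp only [Fin.val_mk]; try omega))
            · exact Or.inr (Fin.ext (by simp only [Fin.val_mk]; try omega))
          · rintro (rfl | rfl) <;> simp only [Fin.val_mk] <;> omega
        · show catAdj n (.inr j) (.inr m) ↔ _
          rw [catAdj_rr]
          simp only [Set.mem_insert_iff, Set.mem_singleton_iff, reduceCtorEq, Sum.inr.injEq,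
            false_or]
          have hm := m.2
          constructor
          · intro h
            exact Fin.ext (by simp only [Fin.val_mk]; try omega)
          · rintro rfl; simp only [Fin.val_mk]; try omega
      rw [hs]
      rw [Set.ncard_insert_of_notMem (by simp [Fin.ext_iff]; try omega), Set.ncard_insert_of_notMem (by simp [Fin.ext_iff]; try omega),
        Set.ncard_singleton]

lemma cat_subcubic (n : ℕ) (hn : 4 ≤ n) :
    ∀ b : Fin n ⊕ Fin (n-2), ((cat n).neighborSet b).ncard = 1 ∨
      ((cat n).neighborSet b).ncard = 3 := by
  rintro (i | j)
  · exact Or.inl (cat_deg_inl n hn i)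
  · exact Or.inr (cat_deg_inr n hn j)

noncomputable def catLeafEquiv (n : ℕ) (hn : 4 ≤ n) :
    {b : Fin n ⊕ Fin (n-2) // ((cat n).neighborSet b).ncard = 1} ≃ Fin n where
  toFun b := Sum.elim id (fun _ => ⟨0, by omega⟩) b.1
  invFun i := ⟨.inl i, cat_deg_inl n hn i⟩
  left_inv := by
    rintro ⟨i | j, hb⟩
    · rfl
    · exfalso
      rw [cat_deg_inr n hn j] at hb
      omega
  right_inv := by intro i; rfl

noncomputable def catDecomp {V : Type} [Finite V] (G : SimpleGraph V) (hn : 4 ≤ Nat.card V) :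
    BranchDecomp G where
  B := Fin (Nat.card V) ⊕ Fin (Nat.card V - 2)
  finB := inferInstance
  T := cat (Nat.card V)
  isTree := cat_isTree _ hn
  subcubic := cat_subcubic _ hn
  L := (catLeafEquiv _ hn).trans (Finite.equivFin V).symm

lemma exists_decomp_width {V : Type} [Finite V] (G : SimpleGraph V) (hn : 4 ≤ Nat.card V) :
    ∃ D : BranchDecomp G, D.widthLE (Nat.card V) :=
  ⟨catDecomp G hn, fun _ _ _ => mmVal_le_card G _⟩

lemma partA {V : Type} [Finite V] (G : SimpleGraph V) (h : IsMinor (SimpleGraph.cycleGraph 4) G)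
    (D : BranchDecomp G) (k : ℕ) (hw : D.widthLE k) : 2 ≤ k := by
  classical
  haveI : Finite D.B := D.finB
  obtain ⟨φ, hne, hconn, hdisj, hedge⟩ := h
  choose a ha using hne
  have hainj : Function.Injective a := by
    intro i j hij
    by_contra hne'
    exact Set.disjoint_left.mp (hdisj i j hne') (ha i) (hij ▸ ha j)
  set b : Fin 4 → D.B := fun i => (D.L.symm (a i)).1 with hb
  have hbinj : Function.Injective b := by
    intro i j hij
    exact hainj (D.L.symm.injective (Subtype.ext hij))
  have hbleaf : ∀ i, (D.T.neighborSet (b i)).ncard = 1 := fun i => (D.L.symm (a i)).2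
  obtain ⟨u, w, hadj, hcard⟩ := balanced D.T D.isTree D.subcubic b hbinj hbleaf
  set A : Set V := D.side u w with hA
  set sp : Fin 4 → Bool := fun i => decide ((φ i ∩ A).Nonempty ∧ (φ i ∩ Aᶜ).Nonempty) with hsp
  set inA : Fin 4 → Bool := fun i => decide (a i ∈ A) with hinA
  have h2 : (Finset.univ.filter fun i => inA i = true).card = 2 := by
    rw [Set.ncard_eq_toFinset_card'] at hcard
    rw [← hcard]
    congr 1
    ext i
    simp only [Finset.mem_filter, Finset.mem_univ, true_and, Set.mem_toFinset, Set.mem_setOf_eq,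
      hinA, decide_eq_true_eq]
    exact Iff.rfl
  obtain ⟨i, j, k', l, hQ1, hQ2, hik, hjl⟩ := coreQ sp inA h2
  have getPair : ∀ i j : Fin 4, Qb sp inA i j = true →
      ∃ x y, x ∈ φ i ∧ y ∈ φ j ∧ x ∈ A ∧ y ∉ A ∧ G.Adj x y := by
    intro i j hQ
    rw [Qb, Bool.or_eq_true] at hQ
    simp only [Bool.and_eq_true, Bool.not_eq_true', beq_iff_eq] at hQ
    rcases hQ with ⟨hij, hsp'⟩ | ⟨⟨⟨⟨hadj4, hsi⟩, hsj⟩, hiA⟩, hjA⟩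
    · subst hij
      have hsplit : (φ i ∩ A).Nonempty ∧ (φ i ∩ Aᶜ).Nonempty := by
        rw [hsp] at hsp'
        exact of_decide_eq_true hsp'
      obtain ⟨⟨p, hp⟩, ⟨q, hq⟩⟩ := hsplit
      obtain ⟨x, y, hx, hy, hxA, hyA, hxy⟩ := cross_of_connected (hconn i) hp.1 hq.1 hp.2 hq.2
      exact ⟨x, y, hx, hy, hxA, hyA, hxy⟩
    · have hC4 : (SimpleGraph.cycleGraph 4).Adj i j := by
        have h' := hadj4
        rw [adj4] at h'
        exact of_decide_eq_true h'
      have hiA' : a i ∈ A := by rw [hinA] at hiA; exact of_decide_eq_true hiA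
      have hjA' : a j ∉ A := by rw [hinA] at hjA; exact of_decide_eq_false hjA
      have hsiN : ¬((φ i ∩ A).Nonempty ∧ (φ i ∩ Aᶜ).Nonempty) := by
        rw [hsp] at hsi; exact of_decide_eq_false hsi
      have hsjN : ¬((φ j ∩ A).Nonempty ∧ (φ j ∩ Aᶜ).Nonempty) := by
        rw [hsp] at hsj; exact of_decide_eq_false hsj
      have hisub : φ i ⊆ A := by
        intro y hy
        by_contra hyA
        exact hsiN ⟨⟨a i, ha i, hiA'⟩, ⟨y, hy, hyA⟩⟩
      have hjsub : ∀ y ∈ φ j, y ∉ A := by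
        intro y hy hyA
        exact hsjN ⟨⟨y, hy, hyA⟩, ⟨a j, ha j, hjA'⟩⟩
      obtain ⟨x, hx, y, hy, hxy⟩ := hedge i j hC4
      exact ⟨x, y, hx, hy, hisub hx, hjsub y hy, hxy⟩
  obtain ⟨x1, y1, hx1, hy1, hx1A, hy1A, he1⟩ := getPair i j hQ1
  obtain ⟨x2, y2, hx2, hy2, hx2A, hy2A, he2⟩ := getPair k' l hQ2
  have hxne : x1 ≠ x2 := fun hh => Set.disjoint_left.mp (hdisj i k' hik) hx1 (hh ▸ hx2)
  have hyne : y1 ≠ y2 := fun hh => Set.disjoint_left.mp (hdisj j l hjl) hy1 (hh ▸ hy2)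
  have h2mm := two_le_mmVal G A hx1A hy1A he1 hx2A hy2A he2 hxne hyne
  exact le_trans h2mm (hw u w hadj)

/-- a `C₄` minor forces mm-width at least 2. -/
theorem two_le_mmw_of_C4_minor (V : Type) [Finite V] (G : SimpleGraph V)
    (h : IsMinor (SimpleGraph.cycleGraph 4) G) : 2 ≤ mmw G := by
  classical
  haveI := Fintype.ofFinite V
  have hn : 4 ≤ Nat.card V := by
    obtain ⟨φ, hne, _, hdisj, _⟩ := h
    choose a ha using hne
    have hainj : Function.Injective a := by
      intro i j hij
      by_contra hne'
      exact Set.disjoint_left.mp (hdisj i j hne') (ha i) (hij ▸ ha j)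
    calc 4 = Fintype.card (Fin 4) := by simp
    _ ≤ Fintype.card V := Fintype.card_le_of_injective a hainj
    _ = Nat.card V := (Nat.card_eq_fintype_card).symm
  obtain ⟨D0, hD0⟩ := exists_decomp_width G hn
  have hSne : {k | ∃ D : BranchDecomp G, D.widthLE k}.Nonempty := ⟨_, D0, hD0⟩
  obtain ⟨D, hD⟩ := Nat.sInf_mem hSne
  exact partA G h D _ hD
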